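/- Let (F, G) be a Frobenius pair between abelian categories with enough projectives. If f : X ⟶ M is a Gorenstein projective precover of M in C, then F(f) : F(X) ⟶ F(M) is a Gorenstein projective precover of F(M) in D. -/

import Mathlib

open CategoryTheory Limits

/-- An object `M` of an abelian category is *Gorenstein projective* if it is a syzygy
(the kernel `ker(P⁰ → P¹)`) of an acyclic complex `P` of projective objects such that
`Hom(P, Q)` is acyclic for every projective `Q`. -/
def IsGorensteinProjective {A : Type*} [Category A] [Abelian A] (M : A) : Prop :=
  ∃ P : CochainComplex A ℤ,
    (∀ n : ℤ, Projective (P.X n)) ∧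
    (∀ n : ℤ, P.ExactAt n) ∧
    Nonempty (M ≅ P.cycles 0) ∧
    ∀ (Q : A), Projective Q → ∀ (n : ℤ) (f : P.X n ⟶ Q), P.d (n - 1) n ≫ f = 0 →
      ∃ g : P.X (n + 1) ⟶ Q, P.d n (n + 1) ≫ g = f

/-- `φ : X ⟶ M` is an `𝒳`-precover of `M` if `X ∈ 𝒳` and every morphism from an object
of `𝒳` to `M` factors through `φ`. -/
def IsPrecover {A : Type*} [Category A] (𝒳 : A → Prop) {X M : A} (φ : X ⟶ M) : Prop :=
  𝒳 X ∧ ∀ (X' : A), 𝒳 X' → ∀ f : X' ⟶ M, ∃ g : X' ⟶ X, g ≫ φ = f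


open CategoryTheory Limits

/-- A functor with adjoints on both sides maps Gorenstein projectives to
Gorenstein projectives. -/
lemma map_isGorensteinProjective {C D : Type*} [Category C] [Category D]
    [Abelian C] [Abelian D]
    (F : C ⥤ D) (G : D ⥤ C) [F.Additive] [G.Additive]
    (adj₁ : F ⊣ G) (adj₂ : G ⊣ F) {M : C}
    (hM : IsGorensteinProjective M) : IsGorensteinProjective (F.obj M) := by
  obtain ⟨P, hproj, hexact, ⟨e⟩, hlift⟩ := hM
  haveI : PreservesLimitsOfSize.{0,0} F := adj₂.rightAdjoint_preservesLimits
  haveI : PreservesColimitsOfSize.{0,0} F := adj₁.leftAdjoint_preservesColimits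
  haveI : PreservesColimitsOfSize.{0,0} G := adj₂.leftAdjoint_preservesColimits
  haveI : PreservesFiniteLimits F := PreservesLimitsOfSize.preservesFiniteLimits F
  haveI : PreservesFiniteColimits F := PreservesColimitsOfSize.preservesFiniteColimits F
  refine ⟨(F.mapHomologicalComplex _).obj P, ?_, ?_, ?_, ?_⟩
  · intro n
    exact adj₁.map_projective _ (hproj n)
  · intro n
    exact (hexact n).map F
  · exact ⟨F.mapIso e ≪≫ ((P.sc 0).mapCyclesIso F).symm⟩
  · intro Q hQ n φ hφ
    haveI : PreservesColimitsOfSize.{0,0} F := adj₁.leftAdjoint_preservesColimits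
    have hGQ : Projective (G.obj Q) := adj₂.map_projective _ hQ
    have hφ' : F.map (P.d (n - 1) n) ≫ φ = 0 := hφ
    have hzero : P.d (n - 1) n ≫ (adj₁.homEquiv _ _) φ = 0 := by
      erw [← adj₁.homEquiv_naturality_left (P.d (n - 1) n) φ, hφ']
      simp [Adjunction.homEquiv_unit]
    obtain ⟨g, hg⟩ := hlift (G.obj Q) hGQ n ((adj₁.homEquiv _ _) φ) hzero
    refine ⟨(adj₁.homEquiv _ _).symm g, ?_⟩
    have := adj₁.homEquiv_naturality_left_symm (P.d n (n + 1)) g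
    show F.map (P.d n (n + 1)) ≫ (adj₁.homEquiv _ _).symm g = φ
    rw [← this, hg]
    exact Equiv.symm_apply_apply _ _

/-- If `(F, G)` is a Frobenius pair between abelian categories with enough projectives
and `f : X ⟶ M` is a Gorenstein projective precover in `C`, then
`F f : F X ⟶ F M` is a Gorenstein projective precover in `D`. -/
theorem frobenius_pair_map_precover {C D : Type*} [Category C] [Category D]
    [Abelian C] [Abelian D] [EnoughProjectives C] [EnoughProjectives D]
    (F : C ⥤ D) (G : D ⥤ C) [F.Additive] [G.Additive]
    (adj₁ : F ⊣ G) (adj₂ : G ⊣ F) {X M : C} (f : X ⟶ M)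
    (hf : IsPrecover (IsGorensteinProjective (A := C)) f) :
    IsPrecover (IsGorensteinProjective (A := D)) (F.map f) := by
  obtain ⟨hX, hfac⟩ := hf
  constructor
  · exact map_isGorensteinProjective F G adj₁ adj₂ hX
  · intro Y hY g
    have hGY : IsGorensteinProjective (G.obj Y) :=
      map_isGorensteinProjective G F adj₂ adj₁ hY
    obtain ⟨h, hh⟩ := hfac (G.obj Y) hGY ((adj₂.homEquiv Y M).symm g)
    refine ⟨(adj₂.homEquiv Y X) h, ?_⟩
    rw [← adj₂.homEquiv_naturality_right, hh, Equiv.apply_symm_apply]
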